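/- Let M satisfy 5e^45 · n ≤ M ≤ 5n·exp(4n/25), and let S be a set of M i.i.d. uniformly random strings in {A,C,G,T}^n. Then with probability at least 1 − exp(−n), the shortest common supersequence of S has length at least 2.5n + (1/5)·√(n·log(M/(5n))). -/

import Mathlib

open Finset
open scoped Classical

/-- Length of the shortest common supersequence of a finite family of strands. -/
noncomputable def scsLen {M : ℕ} (G : Fin M → List (Fin 4)) : ℕ :=
  sInf {m | ∃ L : List (Fin 4), L.length = m ∧ ∀ i, (G i).Sublist L}

set_option maxHeartbeats 1000000

namespace SCS


/-- Greedy rank encoding of a string `s` against a supersequence `L`. -/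
def enc : List (Fin 4) → List (Fin 4) → List ℕ
  | [], _ => []
  | (c :: s), L =>
      ((L.take (L.idxOf c)).dedup.length + 1) :: enc s (L.drop (L.idxOf c + 1))

lemma enc_length (s L : List (Fin 4)) : (enc s L).length = s.length := by
  induction s generalizing L with
  | nil => simp [enc]
  | cons c s ih => simp [enc, ih]

lemma sublist_drop {c : Fin 4} {s L : List (Fin 4)} (h : (c :: s).Sublist L) :
    s.Sublist (L.drop (L.idxOf c + 1)) := by
  induction L with
  | nil => simp at h
  | cons d L ih =>
    cases h with
    | cons _ h =>
      by_cases hd : d = c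
      · rw [hd, List.idxOf_cons_self]
        simpa using (List.sublist_cons_self _ _).trans h
      · rw [List.idxOf_cons_ne _ hd]
        exact ih h
    | cons_cons _ h =>
      rw [List.idxOf_cons_self]
      simpa using h

lemma not_mem_take_indexOf (c : Fin 4) (L : List (Fin 4)) :
    c ∉ L.take (L.idxOf c) := by
  induction L with
  | nil => simp
  | cons d L ih =>
    by_cases hd : d = c
    · subst hd; rw [List.idxOf_cons_self]; simp
    · rw [List.idxOf_cons_ne _ hd]
      simp only [List.take_succ_cons, List.mem_cons]
      rintro (h | h)
      · exact hd h.symm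
      · exact ih h

lemma dedup_len_le_three {c : Fin 4} {l : List (Fin 4)} (hc : c ∉ l) :
    l.dedup.length ≤ 3 := by
  rw [← List.card_toFinset]
  have h1 : l.toFinset ⊆ Finset.univ.erase c := by
    intro x hx
    rw [List.mem_toFinset] at hx
    exact Finset.mem_erase.2 ⟨fun he => hc (he ▸ hx), Finset.mem_univ x⟩
  calc l.toFinset.card ≤ (Finset.univ.erase c).card := Finset.card_le_card h1
    _ = Fintype.card (Fin 4) - 1 := by
        rw [Finset.card_erase_of_mem (Finset.mem_univ c), Finset.card_univ]
    _ ≤ 3 := by simp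

lemma enc_sum {s L : List (Fin 4)} (h : s.Sublist L) : (enc s L).sum ≤ L.length := by
  induction s generalizing L with
  | nil => simp [enc]
  | cons c s ih =>
    have hc : c ∈ L := h.subset (List.mem_cons_self)
    have hk : L.idxOf c < L.length := List.idxOf_lt_length_iff.2 hc
    have h1 : (L.take (L.idxOf c)).dedup.length ≤ L.idxOf c := by
      calc (L.take (L.idxOf c)).dedup.length ≤ (L.take (L.idxOf c)).length :=
            (List.dedup_sublist _).length_le
        _ ≤ L.idxOf c := by simp
    have h2 : (enc s (L.drop (L.idxOf c + 1))).sum ≤ L.length - (L.idxOf c + 1) := by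
      have := ih (sublist_drop h)
      simpa using this
    simp only [enc, List.sum_cons]
    omega

lemma enc_mem_bounds {s L : List (Fin 4)} (h : s.Sublist L) :
    ∀ e ∈ enc s L, 1 ≤ e ∧ e ≤ 4 := by
  induction s generalizing L with
  | nil => simp [enc]
  | cons c s ih =>
    intro e he
    simp only [enc, List.mem_cons] at he
    rcases he with he | he
    · subst he
      have := dedup_len_le_three (not_mem_take_indexOf c L)
      omega
    · exact ih (sublist_drop h) e he

lemma indexOf_eq_of_dedup_take {c₁ c₂ : Fin 4} {L : List (Fin 4)}
    (h₁ : c₁ ∈ L) (h₂ : c₂ ∈ L)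
    (hd : (L.take (L.idxOf c₁)).dedup.length = (L.take (L.idxOf c₂)).dedup.length) :
    L.idxOf c₁ = L.idxOf c₂ := by
  -- helper: strict inequality impossible
  have key : ∀ (a b : Fin 4), a ∈ L → L.idxOf a < L.idxOf b →
      (L.take (L.idxOf a)).dedup.length < (L.take (L.idxOf b)).dedup.length := by
    intro a b ha hab
    have hka : L.idxOf a < L.length := List.idxOf_lt_length_iff.2 ha
    have hsub : (L.take (L.idxOf a + 1)).Sublist (L.take (L.idxOf b)) := by
      have : L.take (L.idxOf a + 1) = (L.take (L.idxOf b)).take (L.idxOf a + 1) := by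
        rw [List.take_take, min_eq_left (by omega)]
      rw [this]
      exact List.take_sublist _ _
    have hsubset : (L.take (L.idxOf a + 1)).toFinset ⊆ (L.take (L.idxOf b)).toFinset := by
      intro x hx
      rw [List.mem_toFinset] at hx ⊢
      exact hsub.subset hx
    have htake : L.take (L.idxOf a + 1) = L.take (L.idxOf a) ++ [a] := by
      rw [List.take_succ]
      congr 1
      rw [List.getElem?_eq_getElem hka, List.getElem_idxOf hka]
      rfl
    have hins : (L.take (L.idxOf a + 1)).toFinset
        = insert a (L.take (L.idxOf a)).toFinset := by
      rw [htake, List.toFinset_append]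
      rw [Finset.insert_eq, Finset.union_comm]
      simp
    have hnot : a ∉ (L.take (L.idxOf a)).toFinset := by
      rw [List.mem_toFinset]; exact not_mem_take_indexOf a L
    have hcard : (L.take (L.idxOf a)).toFinset.card + 1
        ≤ (L.take (L.idxOf b)).toFinset.card := by
      have := Finset.card_le_card hsubset
      rw [hins, Finset.card_insert_of_notMem hnot] at this
      omega
    rw [← List.card_toFinset, ← List.card_toFinset]
    omega
  rcases lt_trichotomy (L.idxOf c₁) (L.idxOf c₂) with h | h | h
  · exact absurd hd (by have := key c₁ c₂ h₁ h; omega)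
  · exact h
  · exact absurd hd (by have := key c₂ c₁ h₂ h; omega)

lemma enc_inj : ∀ (s₁ s₂ L : List (Fin 4)), s₁.Sublist L → s₂.Sublist L →
    s₁.length = s₂.length → enc s₁ L = enc s₂ L → s₁ = s₂ := by
  intro s₁
  induction s₁ with
  | nil =>
    intro s₂ L _ _ hlen _
    simp at hlen
    exact (List.length_eq_zero_iff.1 hlen.symm).symm
  | cons c₁ t₁ ih =>
    intro s₂ L h₁ h₂ hlen henc
    cases s₂ with
    | nil => simp at hlen
    | cons c₂ t₂ =>
      simp only [enc, List.cons.injEq] at henc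
      have hc₁ : c₁ ∈ L := h₁.subset List.mem_cons_self
      have hc₂ : c₂ ∈ L := h₂.subset List.mem_cons_self
      have hidx : L.idxOf c₁ = L.idxOf c₂ :=
        indexOf_eq_of_dedup_take hc₁ hc₂ (by omega)
      have hcc : c₁ = c₂ := by
        have e₁ := List.getElem_idxOf (List.idxOf_lt_length_iff.2 hc₁)
        have e₂ := List.getElem_idxOf (List.idxOf_lt_length_iff.2 hc₂)
        rw [← e₁, ← e₂]
        congr 1
      subst hcc
      have ht : t₁ = t₂ := by
        apply ih t₂ (L.drop (L.idxOf c₁ + 1)) (sublist_drop h₁) (sublist_drop h₂)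
        · simpa using hlen
        · exact henc.2
      rw [ht]



lemma list_sum_eq_sum_getD {l : List ℕ} {n : ℕ} (h : l.length = n) :
    l.sum = ∑ i : Fin n, l.getD i 0 := by
  subst h
  conv_lhs => rw [← List.ofFn_get l]
  rw [List.sum_ofFn]
  apply Finset.sum_congr rfl
  intro i _
  rw [List.getD_eq_getElem l 0 (by simp [i.2])]
  simp

lemma card_sublist_le (n : ℕ) (L : List (Fin 4)) :
    (univ.filter fun x : Fin n → Fin 4 => (List.ofFn x).Sublist L).card ≤
    (univ.filter fun r : Fin n → Fin 4 => n + ∑ i, ((r i : ℕ)) ≤ L.length).card := by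
  refine Finset.card_le_card_of_injOn
      (fun x i => (⟨min ((enc (List.ofFn x) L).getD i 0 - 1) 3, by omega⟩ : Fin 4)) ?_ ?_
  · intro x hx
    simp only [Finset.mem_coe, Finset.mem_filter, Finset.mem_univ, true_and] at hx ⊢
    have hlen : (enc (List.ofFn x) L).length = n := by rw [enc_length, List.length_ofFn]
    have hb : ∀ i : Fin n, 1 ≤ (enc (List.ofFn x) L).getD i 0
        ∧ (enc (List.ofFn x) L).getD i 0 ≤ 4 := by
      intro i
      apply enc_mem_bounds hx
      rw [List.getD_eq_getElem _ 0 (by rw [hlen]; exact i.2)]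
      exact List.getElem_mem _
    have hsum : ∑ i : Fin n, ((enc (List.ofFn x) L).getD i 0) ≤ L.length := by
      rw [← list_sum_eq_sum_getD hlen]
      exact enc_sum hx
    have h2 : ∑ i : Fin n, ((((enc (List.ofFn x) L).getD i 0 - 1) ⊓ 3) + 1)
        = ∑ i : Fin n, (enc (List.ofFn x) L).getD i 0 := by
      apply Finset.sum_congr rfl
      intro i _
      have := hb i
      omega
    rw [Finset.sum_add_distrib] at h2
    simp only [Finset.sum_const, Finset.card_univ, Fintype.card_fin, smul_eq_mul,
      mul_one] at h2
    omega
  · intro x hx y hy hxy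
    simp only [Finset.coe_filter, Set.mem_setOf_eq, Finset.mem_univ, true_and] at hx hy
    have hlx : (enc (List.ofFn x) L).length = n := by rw [enc_length, List.length_ofFn]
    have hly : (enc (List.ofFn y) L).length = n := by rw [enc_length, List.length_ofFn]
    have hbx : ∀ i : Fin n, 1 ≤ (enc (List.ofFn x) L).getD i 0
        ∧ (enc (List.ofFn x) L).getD i 0 ≤ 4 := by
      intro i
      apply enc_mem_bounds hx
      rw [List.getD_eq_getElem _ 0 (by rw [hlx]; exact i.2)]
      exact List.getElem_mem _
    have hby : ∀ i : Fin n, 1 ≤ (enc (List.ofFn y) L).getD i 0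
        ∧ (enc (List.ofFn y) L).getD i 0 ≤ 4 := by
      intro i
      apply enc_mem_bounds hy
      rw [List.getD_eq_getElem _ 0 (by rw [hly]; exact i.2)]
      exact List.getElem_mem _
    have hgetD : ∀ i : Fin n, (enc (List.ofFn x) L).getD i 0
        = (enc (List.ofFn y) L).getD i 0 := by
      intro i
      have := congrFun hxy i
      rw [Fin.mk.injEq] at this
      have h1 := hbx i
      have h2 := hby i
      omega
    have hencEq : enc (List.ofFn x) L = enc (List.ofFn y) L := by
      apply List.ext_getElem (by rw [hlx, hly])
      intro i h1 h2
      have hi : i < n := by rwa [hlx] at h1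
      have := hgetD ⟨i, hi⟩
      rwa [List.getD_eq_getElem _ 0 h1, List.getD_eq_getElem _ 0 h2] at this
    have : List.ofFn x = List.ofFn y :=
      enc_inj _ _ L hx hy (by simp) hencEq
    exact List.ofFn_injective this

/-- Counting functions `Fin M → α` with a pointwise property. -/
lemma card_forall_pi {α : Type*} [Fintype α] (M : ℕ) (p : α → Prop) :
    (univ.filter fun F : Fin M → α => ∀ i, p (F i)).card
      = (univ.filter fun a : α => p a).card ^ M := by
  classical
  rw [← Fintype.card_subtype, ← Fintype.card_subtype]
  rw [Fintype.card_congr (Equiv.subtypePiEquivPi (p := fun _ : Fin M => fun b : α => p b))]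
  rw [Fintype.card_pi]
  simp


lemma card_sum_binary (n k : ℕ) :
    (univ.filter fun a : Fin n → Fin 2 => ∑ i, ((a i : ℕ)) = k).card = n.choose k := by
  have hpc := Finset.card_powersetCard k (univ : Finset (Fin n))
  rw [Finset.card_univ, Fintype.card_fin] at hpc
  rw [← hpc]
  apply Finset.card_bij (fun a _ => univ.filter (fun i => a i = 1))
  · intro a ha
    simp only [Finset.mem_filter, Finset.mem_univ, true_and] at ha
    rw [Finset.mem_powersetCard_univ, Finset.card_filter, ← ha]
    apply Finset.sum_congr rfl
    intro i _
    by_cases h : a i = 1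
    · simp [h]
    · have h2 : (a i : ℕ) < 2 := (a i).2
      have h3 : (a i : ℕ) ≠ 1 := by
        intro hv; exact h (Fin.ext hv)
      simp only [h, if_false]
      omega
  · intro a ha b hb hab
    funext i
    have := Finset.ext_iff.mp hab i
    simp only [Finset.mem_filter, Finset.mem_univ, true_and] at this
    have h2 : (a i : ℕ) < 2 := (a i).2
    have h3 : (b i : ℕ) < 2 := (b i).2
    apply Fin.ext
    simp only [Fin.ext_iff, Fin.val_one] at this
    omega
  · intro S hS
    rw [Finset.mem_powersetCard_univ] at hS
    refine ⟨fun i => if i ∈ S then 1 else 0, ?_, ?_⟩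
    · simp only [Finset.mem_filter, Finset.mem_univ, true_and]
      have hv : ∀ i : Fin n, (((if i ∈ S then (1 : Fin 2) else 0) : Fin 2) : ℕ)
          = if i ∈ S then 1 else 0 := fun i => by by_cases h : i ∈ S <;> simp [h]
      rw [Finset.sum_congr rfl (fun i _ => hv i), Finset.sum_ite_mem]
      simp [hS]
    · ext i
      simp only [Finset.mem_filter, Finset.mem_univ, true_and]
      by_cases h : i ∈ S <;> simp [h]

/-- at least half of binary strings have sum ≥ n/2 -/
lemma card_half (n : ℕ) :
    2 ^ n ≤ 2 * (univ.filter fun a : Fin n → Fin 2 => n ≤ 2 * ∑ i, ((a i : ℕ))).card := by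
  classical
  set S := univ.filter fun a : Fin n → Fin 2 => n ≤ 2 * ∑ i, ((a i : ℕ)) with hS
  set T := univ.filter fun a : Fin n → Fin 2 => ¬ (n ≤ 2 * ∑ i, ((a i : ℕ))) with hT
  have hsum : ∀ a : Fin n → Fin 2, ∑ i, ((a i : ℕ)) ≤ n := by
    intro a
    calc ∑ i, ((a i : ℕ)) ≤ ∑ _i : Fin n, 1 :=
          Finset.sum_le_sum (fun i _ => by have : (a i : ℕ) < 2 := (a i).2; omega)
      _ = n := by simp
  have hTS : T.card ≤ S.card := by
    apply Finset.card_le_card_of_injOn (fun a i => (⟨1 - (a i : ℕ), by omega⟩ : Fin 2))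
    · intro a ha
      simp only [Finset.mem_coe, hT, hS, Finset.mem_filter, Finset.mem_univ, true_and, not_le] at ha ⊢
      have h1 : ∑ i, ((1 - (a i : ℕ))) = n - ∑ i, ((a i : ℕ)) := by
        have : ∑ i, ((1 - (a i : ℕ))) + ∑ i, ((a i : ℕ)) = n := by
          rw [← Finset.sum_add_distrib]
          calc ∑ i, (1 - (a i : ℕ) + (a i : ℕ)) = ∑ _i : Fin n, 1 :=
                Finset.sum_congr rfl (fun i _ => by have : (a i : ℕ) < 2 := (a i).2; omega)
            _ = n := by simp
        omega
      have := hsum a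
      calc n ≤ 2 * (n - ∑ i, ((a i : ℕ))) := by omega
        _ = 2 * ∑ i, (((⟨1 - (a i : ℕ), by omega⟩ : Fin 2) : ℕ)) := by rw [h1]
    · intro a _ b _ hab
      funext i
      have := congrFun hab i
      rw [Fin.mk.injEq] at this
      have h2 : (a i : ℕ) < 2 := (a i).2
      have h3 : (b i : ℕ) < 2 := (b i).2
      apply Fin.ext
      omega
  have htot : S.card + T.card = 2 ^ n := by
    rw [hS, hT, Finset.card_filter_add_card_filter_not, Finset.card_univ,
      Fintype.card_fun]
    simp
  omega

/-- the window bound: sum of binomials below the tail count -/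
lemma card_tail_ge (n p q : ℕ) (hpq : p ≤ q) :
    ∑ k ∈ Finset.Icc p q, n.choose k ≤
      (univ.filter fun a : Fin n → Fin 2 => p ≤ ∑ i, ((a i : ℕ))).card := by
  classical
  have hsub : (Finset.Icc p q).biUnion
      (fun k => univ.filter fun a : Fin n → Fin 2 => ∑ i, ((a i : ℕ)) = k)
      ⊆ univ.filter fun a : Fin n → Fin 2 => p ≤ ∑ i, ((a i : ℕ)) := by
    intro a ha
    rw [Finset.mem_biUnion] at ha
    obtain ⟨k, hk, ha⟩ := ha
    simp only [Finset.mem_filter, Finset.mem_univ, true_and] at ha ⊢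
    rw [Finset.mem_Icc] at hk
    omega
  calc ∑ k ∈ Finset.Icc p q, n.choose k
      = ∑ k ∈ Finset.Icc p q,
          (univ.filter fun a : Fin n → Fin 2 => ∑ i, ((a i : ℕ)) = k).card := by
        apply Finset.sum_congr rfl
        intro k _
        rw [card_sum_binary]
    _ = ((Finset.Icc p q).biUnion
          (fun k => univ.filter fun a : Fin n → Fin 2 => ∑ i, ((a i : ℕ)) = k)).card := by
        rw [Finset.card_biUnion]
        intro k _ l _ hkl
        rw [Function.onFun, Finset.disjoint_left]
        intro a ha hb
        simp only [Finset.mem_filter, Finset.mem_univ, true_and] at ha hb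
        omega
    _ ≤ _ := Finset.card_le_card hsub

/-- binomials decrease to the right of the middle -/
lemma choose_antitone (n : ℕ) : ∀ i j : ℕ, n ≤ 2 * i → i ≤ j → n.choose j ≤ n.choose i := by
  intro i j hi hij
  induction j with
  | zero => have : i = 0 := by omega
            simp [this]
  | succ j ih =>
    rcases Nat.lt_or_ge i (j+1) with h | h
    · have hj : i ≤ j := by omega
      have h1 := ih hj
      have h2 : n.choose (j+1) ≤ n.choose j := by
        have he := Nat.choose_succ_right_eq n j
        have hnj : n - j ≤ j + 1 := by omega
        have h3 : n.choose (j+1) * (j+1) ≤ n.choose j * (j+1) := by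
          rw [he]
          exact Nat.mul_le_mul_left _ hnj
        exact Nat.le_of_mul_le_mul_right h3 (by omega)
      omega
    · have : i = j + 1 := by omega
      simp [this]



lemma central_binom_sqrt : ∀ k : ℕ, 1 ≤ k → (4:ℝ)^k ≤ 2 * Real.sqrt k * ((2*k).choose k) := by
  intro k hk
  induction k with
  | zero => omega
  | succ k ih =>
    rcases Nat.lt_or_ge k 1 with h | h
    · have : k = 0 := by omega
      subst this
      norm_num
    · have IH := ih h
      have hid : ((k:ℝ)+1) * ((2*(k+1)).choose (k+1) : ℝ)
          = 2*(2*(k:ℝ)+1) * ((2*k).choose k : ℝ) := by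
        have h0 := Nat.succ_mul_centralBinom_succ k
        rw [Nat.centralBinom, Nat.centralBinom] at h0
        have := congrArg (Nat.cast (R := ℝ)) h0
        push_cast at this
        convert this using 2 <;> ring_nf
      have hC0 : (0:ℝ) < ((2*k).choose k : ℝ) := by
        exact_mod_cast Nat.choose_pos (by omega)
      have hsq : 2 * Real.sqrt k * Real.sqrt (k+1) ≤ 2*(k:ℝ)+1 := by
        nlinarith [sq_nonneg (Real.sqrt (k+1) - Real.sqrt k),
          Real.sq_sqrt (by positivity : (0:ℝ) ≤ (k:ℝ)),
          Real.sq_sqrt (by positivity : (0:ℝ) ≤ (k:ℝ)+1),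
          Real.sqrt_nonneg (k:ℝ), Real.sqrt_nonneg ((k:ℝ)+1)]
      have hC1 : ((2*(k+1)).choose (k+1) : ℝ)
          = 2*(2*(k:ℝ)+1) * ((2*k).choose k : ℝ) / ((k:ℝ)+1) := by
        field_simp at hid ⊢
        linarith [hid]
      rw [hC1]
      have hs1 : Real.sqrt ((k:ℝ)+1) > 0 := Real.sqrt_pos.2 (by positivity)
      have hs0 : Real.sqrt (k:ℝ) ≥ 0 := Real.sqrt_nonneg _
      have goal2 : (4:ℝ)^(k+1) * ((k:ℝ)+1)
          ≤ 2 * Real.sqrt ((k:ℕ)+1 : ℕ) * (2*(2*(k:ℝ)+1) * ((2*k).choose k : ℝ)) := by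
        have hcast : (((k:ℕ)+1 : ℕ) : ℝ) = (k:ℝ)+1 := by push_cast; ring
        rw [pow_succ]
        calc (4:ℝ)^k * 4 * ((k:ℝ)+1)
            ≤ (2 * Real.sqrt k * ((2*k).choose k : ℝ)) * 4 * ((k:ℝ)+1) := by
              apply mul_le_mul_of_nonneg_right (mul_le_mul_of_nonneg_right IH (by norm_num))
              positivity
          _ ≤ 2 * Real.sqrt ((k:ℝ)+1) * (2*(2*(k:ℝ)+1) * ((2*k).choose k : ℝ)) := by
              have key : Real.sqrt (k:ℝ) * ((k:ℝ)+1) ≤ Real.sqrt ((k:ℝ)+1) * ((2*(k:ℝ)+1))/2 := by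
                have h1 : Real.sqrt ((k:ℝ)+1) * Real.sqrt ((k:ℝ)+1) = (k:ℝ)+1 :=
                  Real.mul_self_sqrt (by positivity)
                nlinarith [hsq, hs1]
              nlinarith [hC0, key]
          _ = 2 * Real.sqrt (((k:ℕ)+1 : ℕ) : ℝ) * (2*(2*(k:ℝ)+1) * ((2*k).choose k : ℝ)) := by
              rw [hcast]
      calc (4:ℝ)^(k+1) = (4:ℝ)^(k+1) * ((k:ℝ)+1) / ((k:ℝ)+1) := by field_simp
        _ ≤ 2 * Real.sqrt ((k:ℕ)+1 : ℕ) * (2*(2*(k:ℝ)+1) * ((2*k).choose k : ℝ)) / ((k:ℝ)+1) := by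
            apply div_le_div_of_nonneg_right goal2 -- maybe wrong name
            positivity
        _ = 2 * Real.sqrt ((k:ℕ)+1 : ℕ) * (2*(2*(k:ℝ)+1) * ((2*k).choose k : ℝ) / ((k:ℝ)+1)) := by
            ring

lemma middle_choose (n : ℕ) (hn : 1 ≤ n) :
    (2:ℝ)^n ≤ 2 * Real.sqrt n * (n.choose ((n+1)/2)) := by
  rcases Nat.even_or_odd n with ⟨k, hk⟩ | ⟨k, hk⟩
  · -- n = 2k
    have hk2 : n = 2*k := by omega
    subst hk2
    have hk1 : 1 ≤ k := by omega
    have hmid : (2*k+1)/2 = k := by omega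
    rw [hmid]
    have := central_binom_sqrt k hk1
    calc (2:ℝ)^(2*k) = (4:ℝ)^k := by rw [pow_mul]; norm_num
      _ ≤ 2 * Real.sqrt k * ((2*k).choose k) := this
      _ ≤ 2 * Real.sqrt (2*k : ℕ) * ((2*k).choose k) := by
          apply mul_le_mul_of_nonneg_right
          · apply mul_le_mul_of_nonneg_left _ (by norm_num)
            apply Real.sqrt_le_sqrt
            push_cast; linarith
          · positivity
  · -- n = 2k+1
    subst hk
    have hmid : (2*k+1+1)/2 = k+1 := by omega
    rw [hmid]
    have hcb := central_binom_sqrt (k+1) (by omega)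
    have hpascal : (2*(k+1)).choose (k+1) = 2 * ((2*k+1).choose (k+1)) := by
      have h1 : 2*(k+1) = (2*k+1) + 1 := by ring
      rw [h1, Nat.choose_succ_succ']  -- C(m+1, k+1) = C(m,k) + C(m,k+1)
      have h2 : (2*k+1).choose k = (2*k+1).choose (k+1) := by
        have h3 := Nat.choose_symm (n := 2*k+1) (k := k+1) (by omega)
        have h4 : 2*k+1 - (k+1) = k := by omega
        rw [h4] at h3
        exact h3
      omega
    have hC : ((2*k+1).choose (k+1) : ℝ) ≥ (4:ℝ)^(k+1) / (4 * Real.sqrt ((k:ℝ)+1)) := by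
      rw [hpascal] at hcb
      push_cast at hcb
      have hs1 : (0:ℝ) < Real.sqrt ((k:ℝ)+1) := Real.sqrt_pos.2 (by positivity)
      rw [ge_iff_le, div_le_iff₀ (by positivity)]
      calc (4:ℝ)^(k+1) ≤ 2 * Real.sqrt ((k:ℝ)+1) * (2 * ((2*k+1).choose (k+1) : ℝ)) := by
            convert hcb using 3
        _ = ((2*k+1).choose (k+1) : ℝ) * (4 * Real.sqrt ((k:ℝ)+1)) := by ring
    have hs1 : (0:ℝ) < Real.sqrt ((k:ℝ)+1) := Real.sqrt_pos.2 (by positivity)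
    have hsle : Real.sqrt ((k:ℝ)+1) ≤ Real.sqrt ((2*k+1 : ℕ) : ℝ) := by
      apply Real.sqrt_le_sqrt
      push_cast; linarith
    have h4 : (4:ℝ)^(k+1) = 2 * (2:ℝ)^(2*k+1) := by
      have : (4:ℝ)^(k+1) = (2:ℝ)^(2*(k+1)) := by
        rw [pow_mul]; norm_num
      rw [this]
      have : 2*(k+1) = (2*k+1)+1 := by ring
      rw [this, pow_succ]
      ring
    have hCpos : (0:ℝ) ≤ ((2*k+1).choose (k+1) : ℝ) := by positivity
    rw [ge_iff_le, div_le_iff₀ (by positivity)] at hC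
    nlinarith [mul_le_mul_of_nonneg_left hsle (mul_nonneg (by norm_num : (0:ℝ) ≤ 2) hCpos)]


lemma exp_neg_three_le {x : ℝ} (h0 : 0 ≤ x) (h1 : x ≤ 2/3) : Real.exp (-(3*x)) ≤ 1 - x := by
  have h2 : 1 + 3*x ≤ Real.exp (3*x) := by
    have := Real.add_one_le_exp (3*x); linarith
  have h3 : Real.exp (-(3*x)) * Real.exp (3*x) = 1 := by
    rw [← Real.exp_add]; simp
  nlinarith [h3, mul_le_mul_of_nonneg_left h2 (by linarith : (0:ℝ) ≤ 1-x),
    Real.exp_pos (3*x), mul_nonneg h0 (by linarith : (0:ℝ) ≤ 2-3*x)]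

lemma choose_ratio (n h d : ℕ) (hh2 : n ≤ 2*h) (hh2' : 2*h ≤ n+1) (h2d : h + 2*d ≤ n) :
    ∀ j, j ≤ 2*d →
      (n.choose h : ℝ) * (((n:ℝ) - 4*d)/((n:ℝ) + 4*d)) ^ j ≤ (n.choose (h+j) : ℝ) := by
  have hn4d : 4*d ≤ n := by omega
  intro j
  induction j with
  | zero => intro _; simp
  | succ j ih =>
    intro hj1
    have hd1 : 1 ≤ d := by omega
    have hn1 : 1 ≤ n := by omega
    have IH := ih (by omega)
    set ρ : ℝ := ((n:ℝ) - 4*d)/((n:ℝ) + 4*d) with hρ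
    have hden : (0:ℝ) < (n:ℝ) + 4*d := by positivity
    have hnum : (0:ℝ) ≤ (n:ℝ) - 4*d := by
      have : (4*d : ℝ) ≤ (n:ℝ) := by exact_mod_cast hn4d
      linarith
    have hρ0 : 0 ≤ ρ := div_nonneg hnum hden.le
    have hhjn : h + j ≤ n := by omega
    have key : (n.choose (h+j+1) : ℝ) * ((h:ℝ)+(j:ℝ)+1)
        = (n.choose (h+j) : ℝ) * ((n:ℝ) - ((h:ℝ)+(j:ℝ))) := by
      have h0 := Nat.choose_succ_right_eq n (h+j)
      have := congrArg (Nat.cast (R := ℝ)) h0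
      push_cast [Nat.cast_sub hhjn] at this
      convert this using 2 <;> push_cast <;> ring
    have hstep : ρ ≤ ((n:ℝ) - ((h:ℝ)+(j:ℝ)))/((h:ℝ)+(j:ℝ)+1) := by
      rw [hρ, div_le_div_iff₀ hden (by positivity)]
      have c1 : (n:ℝ) ≤ 2*(h:ℝ) := by exact_mod_cast hh2
      have c2 : 2*(h:ℝ) ≤ (n:ℝ)+1 := by exact_mod_cast hh2'
      have c3 : (h:ℝ) + 2*(d:ℝ) ≤ (n:ℝ) := by exact_mod_cast h2d
      have c4 : (j:ℝ)+1 ≤ 2*(d:ℝ) := by exact_mod_cast hj1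
      nlinarith
    have hCnn : (0:ℝ) ≤ (n.choose (h+j) : ℝ) := by positivity
    calc (n.choose h : ℝ) * ρ ^ (j+1)
        = ((n.choose h : ℝ) * ρ ^ j) * ρ := by ring
      _ ≤ (n.choose (h+j) : ℝ) * ρ := mul_le_mul_of_nonneg_right IH hρ0
      _ ≤ (n.choose (h+j) : ℝ) * (((n:ℝ) - ((h:ℝ)+(j:ℝ)))/((h:ℝ)+(j:ℝ)+1)) :=
          mul_le_mul_of_nonneg_left hstep hCnn
      _ = (n.choose (h+j+1) : ℝ) := by
          rw [mul_div_assoc']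
          rw [div_eq_iff (by positivity : ((h:ℝ)+(j:ℝ)+1) ≠ 0)]
          linarith [key]



private lemma helper_div (N D : ℝ) (h0 : 0 ≤ D) (hN : 0 < N) (h4 : 4*D ≤ N) :
    1 - 8*D/N ≤ (N - 4*D)/(N + 4*D) := by
  have h1 : 1 - 8*D/N = (N - 8*D)/N := by field_simp
  rw [h1, div_le_div_iff₀ hN (by linarith)]
  nlinarith [sq_nonneg D]

private lemma helper_num1 (N D L SS : ℝ) (hN : 282 ≤ N) (hL : 45 ≤ L)
    (hS2 : SS^2 = N*L) (hS0 : 0 ≤ SS) (hS_hi : SS ≤ 2*N/5)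
    (hD0 : 0 ≤ D) (hD : D ≤ SS/10 + 3/2) :
    48*D^2/N ≤ L - 2 := by
  rw [div_le_iff₀ (by linarith)]
  have hd2 : D^2 ≤ (SS/10 + 3/2)^2 := by nlinarith
  nlinarith [hS2, hS_hi, hS0, hN, hL]

private lemma helper_num2 (D Q : ℝ) (hQ : 0 < Q) (hD : (2/3) * Q ≤ D) :
    Real.exp (-(2:ℝ)) ≤ (D+1) / (4 * Q) := by
  have he2 : (6:ℝ) ≤ Real.exp (2:ℝ) := by
    have h1 := Real.exp_one_gt_d9
    have h2 : Real.exp (2:ℝ) = Real.exp 1 * Real.exp 1 := by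
      rw [← Real.exp_add]; norm_num
    nlinarith
  have h16 : (1/6 : ℝ) ≤ (D+1) / (4 * Q) := by
    rw [le_div_iff₀ (by linarith)]
    linarith
  have h3 : Real.exp (-(2:ℝ)) ≤ 1/6 := by
    rw [Real.exp_neg, inv_le_comm₀ (Real.exp_pos _) (by norm_num)]
    linarith
  linarith


lemma tail_card_ge (n d : ℕ) (Λ : ℝ) (hn : 282 ≤ n) (hΛ : 45 ≤ Λ) (hΛn : Λ ≤ 4*n/25)
    (hd_lo : Real.sqrt ((n:ℝ)*Λ)/10 ≤ (d:ℝ))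
    (hd_hi : (d:ℝ) ≤ Real.sqrt ((n:ℝ)*Λ)/10 + 3/2) :
    Real.exp (-Λ) * 4^n ≤
      ((univ.filter fun r : Fin n → Fin 4 =>
        3*((n+1)/2) + 2*d ≤ ∑ i, ((r i : ℕ))).card : ℝ) := by
  set h : ℕ := (n+1)/2 with hh
  have hnR : (282:ℝ) ≤ (n:ℝ) := by exact_mod_cast hn
  have hnΛ0 : (0:ℝ) ≤ (n:ℝ)*Λ := by positivity
  set S : ℝ := Real.sqrt ((n:ℝ)*Λ) with hS
  have hS2 : S^2 = (n:ℝ)*Λ := Real.sq_sqrt hnΛ0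
  have hS0 : 0 ≤ S := Real.sqrt_nonneg _
  have hS_hi : S ≤ 2*(n:ℝ)/5 := by
    rw [hS]
    have h1 : (n:ℝ)*Λ ≤ (2*(n:ℝ)/5)^2 := by nlinarith
    calc Real.sqrt ((n:ℝ)*Λ) ≤ Real.sqrt ((2*(n:ℝ)/5)^2) := Real.sqrt_le_sqrt h1
      _ = 2*(n:ℝ)/5 := Real.sqrt_sq (by positivity)
  have hS_lo : 112 ≤ S := by
    rw [hS]
    rw [Real.le_sqrt (by norm_num) hnΛ0]
    nlinarith
  have hsqn0 : (0:ℝ) < Real.sqrt n := Real.sqrt_pos.2 (by positivity)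
  have hsqn2 : (Real.sqrt (n:ℝ))^2 = (n:ℝ) := Real.sq_sqrt (by positivity)
  -- d ≥ (2/3)√n
  have hd_sqn : (2/3 : ℝ) * Real.sqrt n ≤ (d:ℝ) := by
    have h1 : (20/3:ℝ) * Real.sqrt n ≤ S := by
      rw [hS, Real.le_sqrt (by positivity) hnΛ0]
      nlinarith
    linarith
  -- nat bounds
  have hdR_hi : (d:ℝ) ≤ (n:ℝ)/25 + 3/2 := by
    have := hd_hi
    nlinarith
  have hd1 : 1 ≤ d := by
    have : (1:ℝ) ≤ (d:ℝ) := by nlinarith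
    exact_mod_cast this
  have hhR1 : 2*(h:ℕ) ≤ n+1 := by omega
  have hhR2 : n ≤ 2*(h:ℕ) := by omega
  have h2d_n : h + 2*d ≤ n := by
    have hhR : ((h:ℕ):ℝ) ≤ ((n:ℝ)+1)/2 := by
      have : ((2*h : ℕ):ℝ) ≤ ((n+1 : ℕ):ℝ) := by exact_mod_cast hhR1
      push_cast at this
      linarith
    have : ((h:ℕ):ℝ) + 2*(d:ℝ) ≤ (n:ℝ) := by nlinarith
    exact_mod_cast this
  have h8d : (8:ℝ)*(d:ℝ)/(n:ℝ) ≤ 2/3 := by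
    rw [div_le_iff₀ (by positivity)]
    nlinarith
  -- the two binary sets
  set Sa := univ.filter fun a : Fin n → Fin 2 => n ≤ 2 * ∑ i, ((a i : ℕ)) with hSa
  set Sb := univ.filter fun a : Fin n → Fin 2 => h + d ≤ ∑ i, ((a i : ℕ)) with hSb
  set E := univ.filter fun r : Fin n → Fin 4 =>
      3*((n+1)/2) + 2*d ≤ ∑ i, ((r i : ℕ)) with hE
  -- injection
  have hprod : Sa.card * Sb.card ≤ E.card := by
    have hcard := Finset.card_le_card_of_injOn
      (s := Sa ×ˢ Sb) (t := E)
      (fun p i => (⟨(p.1 i : ℕ) + 2*((p.2 i : ℕ)), by omega⟩ : Fin 4)) ?_ ?_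
    · rwa [Finset.card_product] at hcard
    · rintro ⟨a, b⟩ hab
      rw [Finset.mem_coe, Finset.mem_product] at hab
      obtain ⟨ha, hb⟩ := hab
      rw [hSa, Finset.mem_filter] at ha
      rw [hSb, Finset.mem_filter] at hb
      rw [Finset.mem_coe, hE, Finset.mem_filter]
      refine ⟨Finset.mem_univ _, ?_⟩
      have hsum : ∑ i, (((⟨(a i : ℕ) + 2*((b i : ℕ)), by omega⟩ : Fin 4) : ℕ))
          = ∑ i, ((a i : ℕ)) + 2 * ∑ i, ((b i : ℕ)) := by
        rw [Finset.mul_sum, ← Finset.sum_add_distrib]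
      rw [hsum]
      have h1 : n ≤ 2 * ∑ i, ((a i : ℕ)) := ha.2
      have h2 : h + d ≤ ∑ i, ((b i : ℕ)) := hb.2
      omega
    · rintro ⟨a, b⟩ _ ⟨a', b'⟩ _ hfe
      have : ∀ i : Fin n, (a i : ℕ) + 2*((b i : ℕ)) = (a' i : ℕ) + 2*((b' i : ℕ)) := by
        intro i
        have := congrFun hfe i
        rwa [Fin.mk.injEq] at this
      have ha : a = a' := by
        funext i
        have h1 := this i
        have := (a i).2; have := (a' i).2; have := (b i).2; have := (b' i).2
        apply Fin.ext; omega
      have hb : b = b' := by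
        funext i
        have h1 := this i
        have := (a i).2; have := (a' i).2; have := (b i).2; have := (b' i).2
        apply Fin.ext; omega
      rw [Prod.mk.injEq]; exact ⟨ha, hb⟩
  -- lower bound for Sb
  have hSbcard : ((d+1) * n.choose (h + 2*d) : ℕ) ≤ Sb.card := by
    calc (d+1) * n.choose (h + 2*d)
        = (Finset.Icc (h+d) (h+2*d)).card * n.choose (h + 2*d) := by
          rw [Nat.card_Icc]
          congr 1
          omega
      _ ≤ ∑ k ∈ Finset.Icc (h+d) (h+2*d), n.choose k := by
          have := Finset.card_nsmul_le_sum (Finset.Icc (h+d) (h+2*d))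
            (fun k => n.choose k) (n.choose (h+2*d)) ?_
          · simpa [smul_eq_mul] using this
          · intro k hk
            rw [Finset.mem_Icc] at hk
            exact choose_antitone n k (h+2*d) (by omega) hk.2
      _ ≤ Sb.card := card_tail_ge n (h+d) (h+2*d) (by omega)
  -- ratio bound
  have hρ := choose_ratio n h d hhR2 hhR1 h2d_n (2*d) (le_refl _)
  -- ρ ≥ exp(-24d/n)
  have hρ_exp : Real.exp (-(24*(d:ℝ)/(n:ℝ))) ≤ ((n:ℝ) - 4*d)/((n:ℝ) + 4*d) := by
    have hx := exp_neg_three_le (x := 8*(d:ℝ)/(n:ℝ)) (by positivity) h8d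
    have heq : -(3*(8*(d:ℝ)/(n:ℝ))) = -(24*(d:ℝ)/(n:ℝ)) := by ring
    rw [heq] at hx
    calc Real.exp (-(24*(d:ℝ)/(n:ℝ))) ≤ 1 - 8*(d:ℝ)/(n:ℝ) := hx
      _ ≤ ((n:ℝ) - 4*d)/((n:ℝ) + 4*d) := by
          apply helper_div _ _ (Nat.cast_nonneg d) (by linarith)
          linarith [hdR_hi]
  -- choose middle bound
  have hmid := middle_choose n (by omega)
  have hchoosemid : (2:ℝ)^n / (2 * Real.sqrt n) ≤ (n.choose h : ℝ) := by
    rw [div_le_iff₀ (by positivity)]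
    calc (2:ℝ)^n ≤ 2 * Real.sqrt n * (n.choose ((n+1)/2)) := hmid
      _ = (n.choose h : ℝ) * (2 * Real.sqrt n) := by rw [hh]; ring
  -- exp pow
  have hρpow : Real.exp (-(48*(d:ℝ)^2/(n:ℝ))) ≤ (((n:ℝ) - 4*d)/((n:ℝ) + 4*d)) ^ (2*d) := by
    have h1 : Real.exp (-(48*(d:ℝ)^2/(n:ℝ))) = Real.exp (-(24*(d:ℝ)/(n:ℝ))) ^ (2*d) := by
      rw [← Real.exp_nat_mul]
      congr 1
      push_cast
      ring
    rw [h1]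
    apply pow_le_pow_left₀ (Real.exp_pos _).le hρ_exp
  -- putting Sb together in ℝ
  have hSbR : ((d:ℝ)+1) * ((2:ℝ)^n / (2 * Real.sqrt n)) * Real.exp (-(48*(d:ℝ)^2/(n:ℝ)))
      ≤ (Sb.card : ℝ) := by
    have hc1 : (((d+1) * n.choose (h + 2*d) : ℕ) : ℝ) ≤ (Sb.card : ℝ) := by
      exact_mod_cast hSbcard
    push_cast at hc1
    have hc2 : (2:ℝ)^n / (2 * Real.sqrt n) * Real.exp (-(48*(d:ℝ)^2/(n:ℝ)))
        ≤ (n.choose (h + 2*d) : ℝ) := by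
      calc (2:ℝ)^n / (2 * Real.sqrt n) * Real.exp (-(48*(d:ℝ)^2/(n:ℝ)))
          ≤ (n.choose h : ℝ) * (((n:ℝ) - 4*d)/((n:ℝ) + 4*d)) ^ (2*d) := by
            apply mul_le_mul hchoosemid hρpow (Real.exp_pos _).le (by positivity)
        _ ≤ (n.choose (h + 2*d) : ℝ) := hρ
    calc ((d:ℝ)+1) * ((2:ℝ)^n / (2 * Real.sqrt n)) * Real.exp (-(48*(d:ℝ)^2/(n:ℝ)))
        = ((d:ℝ)+1) * ((2:ℝ)^n / (2 * Real.sqrt n) * Real.exp (-(48*(d:ℝ)^2/(n:ℝ)))) := by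
          ring
      _ ≤ ((d:ℝ)+1) * (n.choose (h + 2*d) : ℝ) := by
          apply mul_le_mul_of_nonneg_left hc2 (by positivity)
      _ ≤ (Sb.card : ℝ) := hc1
  -- Sa bound in ℝ
  have hSaR : (2:ℝ)^n / 2 ≤ (Sa.card : ℝ) := by
    have := card_half n
    have hc : ((2^n : ℕ) : ℝ) ≤ ((2 * Sa.card : ℕ) : ℝ) := by exact_mod_cast this
    push_cast at hc
    linarith
  -- numeric: 48 d^2 / n ≤ Λ - 2
  have hnum1 : 48*(d:ℝ)^2/(n:ℝ) ≤ Λ - 2 :=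
    helper_num1 _ _ _ _ hnR hΛ hS2 hS0 hS_hi (Nat.cast_nonneg d) hd_hi
  -- numeric: (d+1)/(4√n) ≥ exp(-2)
  have hnum2 : Real.exp (-(2:ℝ)) ≤ ((d:ℝ)+1) / (4 * Real.sqrt n) := by
    apply helper_num2 _ _ hsqn0
    have : (2/3:ℝ) * Real.sqrt n ≤ (d:ℝ) := hd_sqn
    linarith
  -- final chain
  have hER : ((Sa.card : ℝ)) * (Sb.card : ℝ) ≤ (E.card : ℝ) := by exact_mod_cast hprod
  set e48 := Real.exp (-(48*(d:ℝ)^2/(n:ℝ))) with he48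
  set P2 := (2:ℝ)^n with hP2
  have hP2pos : (0:ℝ) < P2 := pow_pos (by norm_num) n
  have hfour : (4:ℝ)^n = P2 * P2 := by
    rw [hP2, ← mul_pow]; norm_num
  have hexpΛ : Real.exp (-Λ) ≤ Real.exp (-(2:ℝ)) * e48 := by
    rw [he48, ← Real.exp_add]
    apply Real.exp_le_exp.2
    linarith
  have he48pos : (0:ℝ) < e48 := Real.exp_pos _
  have key : Real.exp (-Λ) * (4:ℝ)^n
      ≤ (P2/2) * (((d:ℝ)+1) * (P2/(2*Real.sqrt n)) * e48) := by
    rw [hfour]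
    calc Real.exp (-Λ) * (P2*P2)
        ≤ (Real.exp (-(2:ℝ)) * e48) * (P2*P2) :=
          mul_le_mul_of_nonneg_right hexpΛ (by positivity)
      _ ≤ ((((d:ℝ)+1)/(4*Real.sqrt n)) * e48) * (P2*P2) := by
          apply mul_le_mul_of_nonneg_right _ (by positivity)
          exact mul_le_mul_of_nonneg_right hnum2 he48pos.le
      _ = (P2/2) * (((d:ℝ)+1) * (P2/(2*Real.sqrt n)) * e48) := by
          field_simp
          ring
  calc Real.exp (-Λ) * (4:ℝ)^n
      ≤ (P2/2) * (((d:ℝ)+1) * (P2/(2*Real.sqrt n)) * e48) := key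
    _ ≤ (Sa.card : ℝ) * (Sb.card : ℝ) := by
        apply mul_le_mul hSaR hSbR (by positivity) (by positivity)
    _ ≤ (E.card : ℝ) := hER

private lemma four_le_exp : (4:ℝ) ≤ Real.exp 1.5 := by
  have h1 := Real.exp_one_gt_d9
  have h2 : Real.exp (1.5:ℝ) = Real.exp 1 * Real.exp 0.5 := by
    rw [← Real.exp_add]; norm_num
  have h3 : Real.exp (0.5:ℝ) * Real.exp (0.5:ℝ) = Real.exp 1 := by
    rw [← Real.exp_add]; norm_num
  have h4 : (1.6:ℝ) ≤ Real.exp 0.5 := by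
    nlinarith [Real.exp_pos (0.5:ℝ)]
  nlinarith [Real.exp_pos (0.5:ℝ)]

private lemma helper_main (T M n : ℕ) (δ : ℝ)
    (hn : 282 ≤ n) (hδ0 : 0 ≤ δ) (hδ1 : δ ≤ 1)
    (hδM : δ * M = 5 * n)
    (hT : (T:ℝ) ≤ 2.58 * n) :
    ((T:ℝ)+1) * (4:ℝ)^T * (1-δ)^M ≤ Real.exp (-(n:ℝ)) := by
  have hnR : (282:ℝ) ≤ (n:ℝ) := by exact_mod_cast hn
  have h1 : (4:ℝ)^T ≤ Real.exp (1.5 * T) := by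
    calc (4:ℝ)^T ≤ (Real.exp 1.5)^T := pow_le_pow_left₀ (by norm_num) four_le_exp T
      _ = Real.exp ((T:ℝ) * 1.5) := (Real.exp_nat_mul _ _).symm
      _ = Real.exp (1.5 * T) := by ring_nf
  have h2 : (1-δ)^M ≤ Real.exp (-(5*(n:ℝ))) := by
    calc (1-δ)^M ≤ (Real.exp (-δ))^M := by
          apply pow_le_pow_left₀ (by linarith)
          have := Real.add_one_le_exp (-δ)
          linarith
      _ = Real.exp ((M:ℝ) * (-δ)) := (Real.exp_nat_mul _ _).symm
      _ = Real.exp (-(δ*M)) := by ring_nf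
      _ = Real.exp (-(5*(n:ℝ))) := by rw [hδM]
  have h3 : (T:ℝ)+1 ≤ Real.exp (0.13 * n) := by
    have hc := Real.add_one_le_exp (0.13*(n:ℝ)/3)
    have hcube : (1 + 0.13*(n:ℝ)/3)^3 ≤ Real.exp (0.13*(n:ℝ)) := by
      calc (1 + 0.13*(n:ℝ)/3)^3 ≤ (Real.exp (0.13*(n:ℝ)/3))^3 := by
            apply pow_le_pow_left₀ (by positivity)
            linarith
        _ = Real.exp ((3:ℕ) * (0.13*(n:ℝ)/3)) := (Real.exp_nat_mul _ _).symm
        _ = Real.exp (0.13*(n:ℝ)) := by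
            congr 1
            push_cast
            ring
    have hn2 : 282*(n:ℝ) ≤ (n:ℝ)^2 := by nlinarith
    have hn3 : 282*282*(n:ℝ) ≤ (n:ℝ)^3 := by nlinarith [hn2]
    nlinarith [hT, hcube, hn2, hn3]
  have hTnonneg : (0:ℝ) ≤ (T:ℝ)+1 := by positivity
  calc ((T:ℝ)+1) * (4:ℝ)^T * (1-δ)^M
      ≤ (Real.exp (0.13*(n:ℝ)) * Real.exp (1.5*T)) * Real.exp (-(5*(n:ℝ))) := by
        apply mul_le_mul _ h2 (pow_nonneg (by linarith) M) (by positivity)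
        exact mul_le_mul h3 h1 (by positivity) (Real.exp_pos _).le
    _ = Real.exp (0.13*(n:ℝ) + 1.5*T + -(5*(n:ℝ))) := by
        rw [← Real.exp_add, ← Real.exp_add]
    _ ≤ Real.exp (-(n:ℝ)) := by
        apply Real.exp_le_exp.2
        nlinarith [hT, hnR]

lemma scs_exists {M : ℕ} (G : Fin M → List (Fin 4)) :
    ∃ L : List (Fin 4), L.length = scsLen G ∧ ∀ i, (G i).Sublist L := by
  have hne : {m | ∃ L : List (Fin 4), L.length = m ∧ ∀ i, (G i).Sublist L}.Nonempty := by
    refine ⟨(((List.finRange M).map G).flatten).length,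
      ((List.finRange M).map G).flatten, rfl, ?_⟩
    intro i
    exact List.sublist_flatten_of_mem (List.mem_map_of_mem (f := G) (List.mem_finRange i))
  exact Nat.sInf_mem hne

end SCS

open SCS in
theorem stmt9 (n M : ℕ) (hM1 : 5 * Real.exp 45 * n ≤ (M : ℝ))
    (hM2 : (M : ℝ) ≤ 5 * n * Real.exp (4 * n / 25)) :
    (1 - Real.exp (-(n : ℝ))) * (Fintype.card (Fin M → Fin n → Fin 4)) ≤
      ((Finset.univ.filter (fun F : Fin M → Fin n → Fin 4 =>
        2.5 * n + (1 / 5) * Real.sqrt (n * Real.log ((M : ℝ) / (5 * n)))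
          ≤ (scsLen (fun i => List.ofFn (F i)) : ℝ))).card : ℝ) := by
  rcases Nat.eq_zero_or_pos n with hn0 | hnpos
  · subst hn0
    simp only [Nat.cast_zero, neg_zero, Real.exp_zero, sub_self, zero_mul]
    positivity
  have hnR1 : (1:ℝ) ≤ (n:ℝ) := by exact_mod_cast hnpos
  have h5n : (0:ℝ) < 5*(n:ℝ) := by linarith
  -- n ≥ 282
  have hn282R : (281.25:ℝ) ≤ (n:ℝ) := by
    have h1 : 5 * Real.exp 45 * (n:ℝ) ≤ 5 * (n:ℝ) * Real.exp (4*n/25) := le_trans hM1 hM2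
    have h2 : Real.exp 45 ≤ Real.exp (4*(n:ℝ)/25) := by
      nlinarith [Real.exp_pos (45:ℝ), Real.exp_pos (4*(n:ℝ)/25)]
    have h4 : (45:ℝ) ≤ 4*(n:ℝ)/25 := Real.exp_le_exp.1 h2
    linarith
  have hn282 : 282 ≤ n := by
    by_contra hcon
    push_neg at hcon
    have h1 : n ≤ 281 := by omega
    have : (n:ℝ) ≤ 281 := by exact_mod_cast h1
    linarith
  have hnR : (282:ℝ) ≤ (n:ℝ) := by exact_mod_cast hn282
  set Λ : ℝ := Real.log ((M:ℝ)/(5*n)) with hΛdef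
  have hM0R : (0:ℝ) < M := lt_of_lt_of_le (by positivity) hM1
  have hM1n : 1 ≤ M := by exact_mod_cast Nat.one_le_iff_ne_zero.2 (by
    intro h0
    rw [h0] at hM0R
    simp at hM0R)
  have hratio_pos : (0:ℝ) < (M:ℝ)/(5*n) := by positivity
  have hΛ45 : 45 ≤ Λ := by
    rw [hΛdef]
    have h1 : Real.exp 45 ≤ (M:ℝ)/(5*n) := by
      rw [le_div_iff₀ h5n]
      calc Real.exp 45 * (5*(n:ℝ)) = 5*Real.exp 45 * n := by ring
        _ ≤ M := hM1
    calc (45:ℝ) = Real.log (Real.exp 45) := (Real.log_exp _).symm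
      _ ≤ Real.log ((M:ℝ)/(5*n)) := Real.log_le_log (Real.exp_pos _) h1
  have hΛn : Λ ≤ 4*(n:ℝ)/25 := by
    rw [hΛdef]
    have h1 : (M:ℝ)/(5*n) ≤ Real.exp (4*(n:ℝ)/25) := by
      rw [div_le_iff₀ h5n]
      calc (M:ℝ) ≤ 5*n*Real.exp (4*n/25) := hM2
        _ = Real.exp (4*(n:ℝ)/25) * (5*n) := by ring
    calc Real.log ((M:ℝ)/(5*n)) ≤ Real.log (Real.exp (4*(n:ℝ)/25)) :=
          Real.log_le_log hratio_pos h1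
      _ = 4*(n:ℝ)/25 := Real.log_exp _
  have hexpΛ : Real.exp (-Λ) = 5*(n:ℝ)/M := by
    rw [hΛdef, Real.exp_neg, Real.exp_log hratio_pos, inv_div]
  set s : ℝ := 1 / 5 * Real.sqrt ((n:ℝ) * Λ) with hsdef
  set t : ℝ := 2.5*(n:ℝ) + s with htdef
  have hS0 : 0 ≤ Real.sqrt ((n:ℝ)*Λ) := Real.sqrt_nonneg _
  have hs0 : 0 ≤ s := by rw [hsdef]; positivity
  have ht0 : 0 ≤ t := by rw [htdef]; linarith
  set T : ℕ := ⌊t⌋₊ with hTdef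
  set d : ℕ := ⌈(s+1)/2⌉₊ with hddef
  clear_value s t T d
  clear_value Λ
  have hS_hi : Real.sqrt ((n:ℝ)*Λ) ≤ 2*(n:ℝ)/5 := by
    have h1 : (n:ℝ)*Λ ≤ (2*(n:ℝ)/5)^2 := by nlinarith
    calc Real.sqrt ((n:ℝ)*Λ) ≤ Real.sqrt ((2*(n:ℝ)/5)^2) := Real.sqrt_le_sqrt h1
      _ = 2*(n:ℝ)/5 := Real.sqrt_sq (by positivity)
  have hdceil_lo : (s+1)/2 ≤ (d:ℝ) := by
    rw [hddef]; exact Nat.le_ceil _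
  have hdceil_hi : (d:ℝ) ≤ (s+1)/2 + 1 := by
    rw [hddef]
    have := Nat.ceil_lt_add_one (R := ℝ) (a := (s+1)/2) (by linarith)
    linarith
  have hd_lo : Real.sqrt ((n:ℝ)*Λ)/10 ≤ (d:ℝ) := by
    rw [hsdef] at hdceil_lo
    linarith
  have hd_hi : (d:ℝ) ≤ Real.sqrt ((n:ℝ)*Λ)/10 + 3/2 := by
    rw [hsdef] at hdceil_hi
    linarith
  -- T + 1 ≤ n + 3h + 2d
  have hTd : T + 1 ≤ n + 3*((n+1)/2) + 2*d := by
    have h2d : s + 1 ≤ 2*(d:ℝ) := by linarith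
    have hTt : (T:ℝ) ≤ t := by rw [hTdef]; exact Nat.floor_le ht0
    have hh : (n:ℝ)/2 ≤ (((n+1)/2 : ℕ):ℝ) := by
      have h1 : n ≤ 2*((n+1)/2) := by omega
      have h2 : (n:ℝ) ≤ ((2*((n+1)/2) : ℕ) : ℝ) := by exact_mod_cast h1
      push_cast at h2
      linarith
    have hR : (T:ℝ) + 1 ≤ (n:ℝ) + 3*(((n+1)/2 : ℕ):ℝ) + 2*(d:ℝ) := by
      rw [htdef] at hTt
      linarith
    exact_mod_cast hR
  -- the key tail estimate
  have hE := tail_card_ge n d Λ hn282 hΛ45 (by linarith) hd_lo hd_hi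
  have hE4 : (univ.filter fun r : Fin n → Fin 4 =>
      3*((n+1)/2) + 2*d ≤ ∑ i, ((r i : ℕ))).card ≤ 4^n := by
    calc _ ≤ (univ : Finset (Fin n → Fin 4)).card := Finset.card_filter_le _ _
      _ = 4^n := by rw [Finset.card_univ, Fintype.card_fun]; simp
  obtain ⟨Ec, hEc⟩ : ∃ Ec, (univ.filter fun r : Fin n → Fin 4 =>
      3*((n+1)/2) + 2*d ≤ ∑ i, ((r i : ℕ))).card = Ec := ⟨_, rfl⟩
  rw [hEc] at hE hE4
  -- the complement bound, hoisted
  have hK2 : (univ.filter fun r : Fin n → Fin 4 => n + ∑ i, ((r i : ℕ)) ≤ T).card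
      ≤ 4^n - Ec := by
    have h3 : (univ.filter fun r : Fin n → Fin 4 => n + ∑ i, ((r i : ℕ)) ≤ T).card +
        (univ.filter fun r : Fin n → Fin 4 => ¬ (n + ∑ i, ((r i : ℕ)) ≤ T)).card = 4^n := by
      rw [Finset.card_filter_add_card_filter_not, Finset.card_univ, Fintype.card_fun]
      simp
    have h4 : Ec
        ≤ (univ.filter fun r : Fin n → Fin 4 => ¬ (n + ∑ i, ((r i : ℕ)) ≤ T)).card := by
      rw [← hEc]
      apply Finset.card_le_card
      intro r hr
      simp only [Finset.mem_filter, Finset.mem_univ, true_and] at hr ⊢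
      rw [not_le]
      calc T < T + 1 := Nat.lt_succ_self _
        _ ≤ n + 3*((n+1)/2) + 2*d := hTd
        _ ≤ n + ∑ i, ((r i : ℕ)) := by
            rw [Nat.add_assoc]
            exact Nat.add_le_add_left hr n
    apply Nat.le_sub_of_add_le
    calc (univ.filter fun r : Fin n → Fin 4 => n + ∑ i, ((r i : ℕ)) ≤ T).card + Ec
        ≤ (univ.filter fun r : Fin n → Fin 4 => n + ∑ i, ((r i : ℕ)) ≤ T).card +
          (univ.filter fun r : Fin n → Fin 4 => ¬ (n + ∑ i, ((r i : ℕ)) ≤ T)).card :=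
          Nat.add_le_add_left h4 _
      _ = 4^n := h3
  clear hEc
  -- per-L bound
  have hsubK : ∀ L : List (Fin 4), L.length ≤ T →
      (univ.filter fun x : Fin n → Fin 4 => (List.ofFn x).Sublist L).card ≤ 4^n - Ec := by
    intro L hL
    have h1 := card_sublist_le n L
    have h2 : (univ.filter fun r : Fin n → Fin 4 => n + ∑ i, ((r i : ℕ)) ≤ L.length).card
        ≤ (univ.filter fun r : Fin n → Fin 4 => n + ∑ i, ((r i : ℕ)) ≤ T).card := by
      apply Finset.card_le_card
      intro r hr
      simp only [Finset.mem_filter, Finset.mem_univ, true_and] at hr ⊢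
      exact le_trans hr hL
    exact le_trans (le_trans h1 h2) hK2
  -- bad set and union bound
  set Bad := univ.filter (fun F : Fin M → Fin n → Fin 4 =>
      ¬ (t ≤ (scsLen (fun i => List.ofFn (F i)) : ℝ))) with hBaddef
  clear_value Bad
  have hbadsub : Bad ⊆ (Finset.range (T+1)).biUnion (fun m =>
      ((univ : Finset (Fin m → Fin 4)).image List.ofFn).biUnion
      (fun L => univ.filter (fun F : Fin M → Fin n → Fin 4 =>
        ∀ i, (List.ofFn (F i)).Sublist L))) := by
    intro F hF
    rw [hBaddef, Finset.mem_filter] at hF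
    obtain ⟨L, hLlen, hLsub⟩ := scs_exists (fun i => List.ofFn (F i))
    have hLT : L.length ≤ T := by
      rw [hLlen, hTdef]
      apply Nat.le_floor
      exact (not_le.mp hF.2).le
    rw [Finset.mem_biUnion]
    refine ⟨L.length, Finset.mem_range.mpr (Nat.lt_succ_of_le hLT), ?_⟩
    rw [Finset.mem_biUnion]
    refine ⟨L, ?_, ?_⟩
    · rw [Finset.mem_image]
      exact ⟨L.get, Finset.mem_univ _, List.ofFn_get L⟩
    · simp only [Finset.mem_filter]
      exact ⟨Finset.mem_univ _, hLsub⟩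
  set K : ℕ := 4^n - Ec with hKdef
  clear_value K
  have hbadcard : Bad.card ≤ (T+1) * (4^T * K^M) := by
    calc Bad.card ≤ _ := Finset.card_le_card hbadsub
      _ ≤ ∑ m ∈ Finset.range (T+1),
          (((univ : Finset (Fin m → Fin 4)).image List.ofFn).biUnion
          (fun L => univ.filter (fun F : Fin M → Fin n → Fin 4 =>
            ∀ i, (List.ofFn (F i)).Sublist L))).card := Finset.card_biUnion_le
      _ ≤ ∑ m ∈ Finset.range (T+1), ∑ L ∈ (univ : Finset (Fin m → Fin 4)).image List.ofFn,
          (univ.filter (fun F : Fin M → Fin n → Fin 4 =>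
            ∀ i, (List.ofFn (F i)).Sublist L)).card :=
          Finset.sum_le_sum (fun m _ => Finset.card_biUnion_le)
      _ ≤ ∑ m ∈ Finset.range (T+1), ∑ _L ∈ (univ : Finset (Fin m → Fin 4)).image List.ofFn,
          K^M := by
          apply Finset.sum_le_sum
          intro m hm
          apply Finset.sum_le_sum
          intro L hL
          have heq : (univ.filter (fun F : Fin M → Fin n → Fin 4 =>
              ∀ i, (List.ofFn (F i)).Sublist L)).card
              = (univ.filter (fun x : Fin n → Fin 4 => (List.ofFn x).Sublist L)).card ^ M := by
            convert card_forall_pi M (fun x : Fin n → Fin 4 => (List.ofFn x).Sublist L)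
              using 3
            exact (Finset.filter_congr_decidable _ _ _).symm
          rw [heq]
          apply Nat.pow_le_pow_left
          apply hsubK
          rw [Finset.mem_image] at hL
          obtain ⟨f, _, hf⟩ := hL
          rw [Finset.mem_range] at hm
          rw [← hf, List.length_ofFn]
          exact Nat.lt_succ_iff.mp hm
      _ = ∑ m ∈ Finset.range (T+1),
          ((univ : Finset (Fin m → Fin 4)).image List.ofFn).card * K^M := by
          apply Finset.sum_congr rfl
          intro m _
          rw [Finset.sum_const, smul_eq_mul]
      _ ≤ ∑ _m ∈ Finset.range (T+1), 4^T * K^M := by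
          apply Finset.sum_le_sum
          intro m hm
          apply Nat.mul_le_mul_right
          calc ((univ : Finset (Fin m → Fin 4)).image List.ofFn).card
              ≤ (univ : Finset (Fin m → Fin 4)).card := Finset.card_image_le
            _ = 4^m := by rw [Finset.card_univ, Fintype.card_fun]; simp
            _ ≤ 4^T := Nat.pow_le_pow_right (by norm_num)
                (Nat.lt_succ_iff.mp (Finset.mem_range.mp hm))
      _ = (T+1) * (4^T * K^M) := by
          rw [Finset.sum_const, Finset.card_range, smul_eq_mul]
  -- real estimates
  have hKR : (K:ℝ) ≤ (1 - Real.exp (-Λ)) * 4^n := by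
    have hKcast : (K:ℝ) = ((4^n : ℕ) : ℝ) - (Ec : ℝ) := by
      rw [hKdef, Nat.cast_sub hE4]
    rw [hKcast]
    push_cast
    nlinarith [hE]
  have hδ0 : 0 ≤ Real.exp (-Λ) := (Real.exp_pos _).le
  have hδ1 : Real.exp (-Λ) ≤ 1 := Real.exp_le_one_iff.2 (by linarith)
  have hδM : Real.exp (-Λ) * M = 5*(n:ℝ) := by
    rw [hexpΛ]
    field_simp
  have hTle : (T:ℝ) ≤ 2.58 * (n:ℝ) := by
    have h1 : (T:ℝ) ≤ t := by rw [hTdef]; exact Nat.floor_le ht0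
    rw [htdef, hsdef] at h1
    linarith
  have hmain := helper_main T M n (Real.exp (-Λ)) hn282 hδ0 hδ1 hδM hTle
  have hbadR : (Bad.card : ℝ) ≤ Real.exp (-(n:ℝ)) * ((4:ℝ)^n)^M := by
    have hc1 : (Bad.card : ℝ) ≤ ((T:ℝ)+1) * (4:ℝ)^T * ((K:ℝ))^M := by
      have := hbadcard
      have hc : (Bad.card : ℝ) ≤ (((T+1) * (4^T * K^M) : ℕ) : ℝ) := by exact_mod_cast this
      push_cast at hc
      calc (Bad.card : ℝ) ≤ _ := hc
        _ = ((T:ℝ)+1) * (4:ℝ)^T * ((K:ℝ))^M := by ring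
    have hc2 : ((K:ℝ))^M ≤ ((1 - Real.exp (-Λ)) * 4^n)^M :=
      pow_le_pow_left₀ (by positivity) hKR M
    calc (Bad.card : ℝ) ≤ ((T:ℝ)+1) * (4:ℝ)^T * ((K:ℝ))^M := hc1
      _ ≤ ((T:ℝ)+1) * (4:ℝ)^T * ((1 - Real.exp (-Λ)) * 4^n)^M := by
          apply mul_le_mul_of_nonneg_left hc2 (by positivity)
      _ = (((T:ℝ)+1) * (4:ℝ)^T * (1 - Real.exp (-Λ))^M) * ((4:ℝ)^n)^M := by
          rw [mul_pow]
          ring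
      _ ≤ Real.exp (-(n:ℝ)) * ((4:ℝ)^n)^M := by
          apply mul_le_mul_of_nonneg_right hmain (by positivity)
  -- conclude
  have hTot : (Fintype.card (Fin M → Fin n → Fin 4)) = (4^n)^M := by
    rw [Fintype.card_fun, Fintype.card_fun]
    simp
  have hsplit : (univ.filter (fun F : Fin M → Fin n → Fin 4 =>
      t ≤ (scsLen (fun i => List.ofFn (F i)) : ℝ))).card + Bad.card
      = Fintype.card (Fin M → Fin n → Fin 4) := by
    rw [hBaddef, Finset.card_filter_add_card_filter_not, Finset.card_univ]
  have hTotR : ((Fintype.card (Fin M → Fin n → Fin 4)) : ℝ) = ((4:ℝ)^n)^M := by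
    rw [hTot]
    push_cast
    ring
  have hgoodR : ((univ.filter (fun F : Fin M → Fin n → Fin 4 =>
      t ≤ (scsLen (fun i => List.ofFn (F i)) : ℝ))).card : ℝ)
      = ((4:ℝ)^n)^M - (Bad.card : ℝ) := by
    have := congrArg (Nat.cast (R := ℝ)) hsplit
    push_cast at this
    rw [hTotR] at this
    linarith
  rw [hTotR, hgoodR]
  nlinarith [hbadR, pow_pos (pow_pos (by norm_num : (0:ℝ) < 4) n) M]
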